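/- arXiv:1210.2809 — 5 statements merged into one kernel-verified Lean document; each statement's English description precedes it below -/
import Mathlib

section
/- Let M : [−1,∞) → ℝ≥0 be continuous with M ≡ 0 on [−1,0], and suppose there are constants K₁ > 0, C > 0 and α < 0 such that M(t) ≤ K₁ + C ∫₀ᵗ e^{2α(t−s)}(M(s) + M(s−1)) ds for all t ≥ 0. Then M(t) ≤ K₁ e^{ν t} for all t ≥ 0, where ν = C(1 + e^{−2α}). -/
open Set intervalIntegral MeasureTheory

theorem stmt2 (M : ℝ → ℝ) (K₁ C α : ℝ)
    (hcont : ContinuousOn M (Set.Ici (-1)))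
    (hnn : ∀ t, -1 ≤ t → 0 ≤ M t)
    (hzero : ∀ t ∈ Set.Icc (-1 : ℝ) 0, M t = 0)
    (hK : 0 < K₁) (hC : 0 < C) (hα : α < 0)
    (hineq : ∀ t ≥ (0 : ℝ), M t ≤ K₁ + C * ∫ s in (0 : ℝ)..t,
        Real.exp (2 * α * (t - s)) * (M s + M (s - 1))) :
    ∀ t ≥ (0 : ℝ), M t ≤ K₁ * Real.exp (C * (1 + Real.exp (-2 * α)) * t) := by
  have hMint : ∀ a b : ℝ, -1 ≤ a → -1 ≤ b → IntervalIntegrable M volume a b := by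
    intro a b ha hb
    exact (hcont.mono (Set.ordConnected_Ici.uIcc_subset ha hb)).intervalIntegrable
  set f : ℝ → ℝ := fun t => ∫ s in (0:ℝ)..t, M s with hfdef
  have hfnn : ∀ t, 0 ≤ t → 0 ≤ f t := by
    intro t ht
    exact intervalIntegral.integral_nonneg ht (fun u hu => hnn u (by linarith [hu.1]))
  -- the key pointwise inequality
  have key : ∀ t, 0 ≤ t → M t ≤ K₁ + 2 * C * f t := by
    intro t ht
    have hMs : IntervalIntegrable M volume 0 t := hMint 0 t (by norm_num) (by linarith)
    have hcont1 : ContinuousOn (fun s => M (s - 1)) (Set.Icc 0 t) := by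
      apply hcont.comp (by fun_prop : Continuous (fun s : ℝ => s - 1)).continuousOn
      intro s hs; simp only [Set.mem_Ici]; linarith [hs.1]
    have hMs1 : IntervalIntegrable (fun s => M (s - 1)) volume 0 t := by
      refine ContinuousOn.intervalIntegrable ?_
      rwa [Set.uIcc_of_le ht]
    have hsum : IntervalIntegrable (fun s => M s + M (s - 1)) volume 0 t := hMs.add hMs1
    have hexp : IntervalIntegrable (fun s => Real.exp (2 * α * (t - s)) * (M s + M (s - 1)))
        volume 0 t := by
      refine ContinuousOn.intervalIntegrable ?_
      rw [Set.uIcc_of_le ht]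
      refine (Continuous.continuousOn (by fun_prop)).mul ?_
      refine ContinuousOn.add ?_ hcont1
      exact hcont.mono (fun s hs => by simp only [Set.mem_Ici]; linarith [hs.1])
    have step1 : (∫ s in (0:ℝ)..t, Real.exp (2 * α * (t - s)) * (M s + M (s - 1)))
        ≤ ∫ s in (0:ℝ)..t, (M s + M (s - 1)) := by
      refine intervalIntegral.integral_mono_on ht hexp hsum ?_
      intro s hs
      have h1 : Real.exp (2 * α * (t - s)) ≤ 1 := by
        rw [Real.exp_le_one_iff]
        nlinarith [hs.1, hs.2]
      have h2 : 0 ≤ M s + M (s - 1) := by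
        have := hnn s (by linarith [hs.1])
        have := hnn (s - 1) (by linarith [hs.1])
        linarith
      nlinarith [Real.exp_pos (2 * α * (t - s))]
    have step2 : (∫ s in (0:ℝ)..t, (M s + M (s - 1))) = f t + ∫ s in (0:ℝ)..t, M (s - 1) :=
      intervalIntegral.integral_add hMs hMs1
    have step3 : (∫ s in (0:ℝ)..t, M (s - 1)) = ∫ s in (-1:ℝ)..(t-1), M s := by
      rw [intervalIntegral.integral_comp_sub_right M 1]
      norm_num
    have step4 : (∫ s in (-1:ℝ)..(t-1), M s) ≤ ∫ s in (-1:ℝ)..t, M s := by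
      refine intervalIntegral.integral_mono_interval le_rfl (by linarith) (by linarith) ?_
        (hMint (-1) t le_rfl (by linarith))
      filter_upwards [MeasureTheory.ae_restrict_mem measurableSet_Ioc] with s hs
      exact hnn s (le_of_lt hs.1)
    have step5 : (∫ s in (-1:ℝ)..t, M s) = f t := by
      have hsplit : (∫ s in (-1:ℝ)..t, M s) = (∫ s in (-1:ℝ)..0, M s) + ∫ s in (0:ℝ)..t, M s :=
        (intervalIntegral.integral_add_adjacent_intervals
          (hMint (-1) 0 le_rfl (by norm_num)) hMs).symm
      have hzero' : (∫ s in (-1:ℝ)..0, M s) = 0 := by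
        rw [intervalIntegral.integral_congr (g := fun _ => (0:ℝ)) ?_]
        · simp
        · intro s hs
          rw [Set.uIcc_of_le (by norm_num : (-1:ℝ) ≤ 0)] at hs
          exact hzero s hs
      rw [hsplit, hzero']; ring
    have := hineq t ht
    have hint_le : (∫ s in (0:ℝ)..t, Real.exp (2 * α * (t - s)) * (M s + M (s - 1)))
        ≤ 2 * f t := by
      calc _ ≤ ∫ s in (0:ℝ)..t, (M s + M (s - 1)) := step1
        _ = f t + ∫ s in (0:ℝ)..t, M (s - 1) := step2
        _ ≤ f t + f t := by rw [step3]; linarith [step4, step5.le, step5.ge]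
        _ = 2 * f t := by ring
    nlinarith
  -- Gronwall for f on [0, t]
  intro t ht
  have hMs : IntervalIntegrable M volume 0 t := hMint 0 t (by norm_num) (by linarith)
  have hfc : ContinuousOn f (Set.Icc 0 t) := by
    have := intervalIntegral.continuousOn_primitive_interval (a := (0:ℝ)) (b := t)
      (f := M) (μ := volume) ?_
    · rwa [Set.uIcc_of_le ht] at this
    · rw [Set.uIcc_of_le ht]
      exact (hcont.mono (fun s hs => by simp only [Set.mem_Ici]; linarith [hs.1])).integrableOn_compact
        isCompact_Icc
  have hfderiv : ∀ x ∈ Set.Ico 0 t, HasDerivWithinAt f (M x) (Set.Ici x) x := by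
    intro x hx
    refine intervalIntegral.integral_hasDerivWithinAt_right
      (hMint 0 x (by norm_num) (by linarith [hx.1])) ?_ ?_
    · exact ⟨Set.Ioi x, self_mem_nhdsWithin,
        ((hcont.mono (fun s hs => by simp only [Set.mem_Ioi, Set.mem_Ici] at *; linarith [hx.1])).aestronglyMeasurable
          measurableSet_Ioi)⟩
    · exact (hcont x (by simp only [Set.mem_Ici]; linarith [hx.1])).mono
        (fun s hs => by simp only [Set.mem_Ioi, Set.mem_Ici] at *; linarith [hx.1])
  have hgron := norm_le_gronwallBound_of_norm_deriv_right_le (δ := 0) (K := 2 * C) (ε := K₁)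
    hfc hfderiv (by simp [hfdef]) ?_
  · have hft := hgron t (Set.mem_Icc.2 ⟨ht, le_rfl⟩)
    rw [Real.norm_eq_abs, abs_of_nonneg (hfnn t ht)] at hft
    rw [gronwallBound_of_K_ne_0 (by positivity)] at hft
    have h2C : 2 * C ≤ C * (1 + Real.exp (-2 * α)) := by
      have : (1:ℝ) ≤ Real.exp (-2 * α) := Real.one_le_exp (by linarith)
      nlinarith
    have hexp_le : Real.exp (2 * C * t) ≤ Real.exp (C * (1 + Real.exp (-2 * α)) * t) := by
      apply Real.exp_le_exp.2
      exact mul_le_mul_of_nonneg_right h2C ht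
    have := key t ht
    have hCpos : (0:ℝ) < 2 * C := by linarith
    -- M t ≤ K₁ + 2C f t ≤ K₁ + 2C * (K₁/(2C))(e^{2Ct}-1) = K₁ e^{2Ct}
    have : M t ≤ K₁ * Real.exp (2 * C * t) := by
      have h1 : 2 * C * f t ≤ 2 * C * ((0:ℝ) * Real.exp (2 * C * (t - 0)) +
          K₁ / (2 * C) * (Real.exp (2 * C * (t - 0)) - 1)) :=
        mul_le_mul_of_nonneg_left hft (by linarith)
      have h2 : 2 * C * (K₁ / (2 * C) * (Real.exp (2 * C * (t - 0)) - 1))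
          = K₁ * (Real.exp (2 * C * t) - 1) := by
        field_simp
        rw [sub_zero]
      simp only [zero_mul, zero_add] at h1
      rw [h2] at h1
      linarith
    calc M t ≤ K₁ * Real.exp (2 * C * t) := this
      _ ≤ K₁ * Real.exp (C * (1 + Real.exp (-2 * α)) * t) :=
        mul_le_mul_of_nonneg_left hexp_le hK.le
  · intro x hx
    rw [Real.norm_eq_abs, Real.norm_eq_abs, abs_of_nonneg (hnn x (by linarith [hx.1])),
      abs_of_nonneg (hfnn x hx.1)]
    linarith [key x hx.1]
end

section
/- Let y : [0,∞) → ℝ≥0 be continuous (extended by 0 on [−1,0)), and r : [0,∞) → ℝ with sup_{t≥0} |r(t)e^{−λt}| < ∞ for some λ > 0 satisfying λ − p − q e^{−λ} > 0 (p, q ≥ 0). If y(t) ≤ p ∫₀ᵗ y(s) ds + q ∫₀ᵗ y(s−1) ds + r(t) for all t ≥ 0, then there exists a constant C = C(λ) such that y(t) ≤ C e^{λ t} for all t ≥ 0. -/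
open MeasureTheory intervalIntegral Set

theorem stmt3 (y r : ℝ → ℝ) (p q lam : ℝ)
    (hy_cont : ContinuousOn y (Set.Ici 0))
    (hy_nn : ∀ t ≥ (0 : ℝ), 0 ≤ y t)
    (hy0 : ∀ t ∈ Set.Ico (-1 : ℝ) 0, y t = 0)
    (hp : 0 ≤ p) (hq : 0 ≤ q) (hlam : 0 < lam)
    (hchar : lam - p - q * Real.exp (-lam) > 0)
    (hr : ∃ R, ∀ t ≥ (0 : ℝ), |r t * Real.exp (-lam * t)| ≤ R)
    (hineq : ∀ t ≥ (0 : ℝ), y t ≤ p * (∫ s in (0 : ℝ)..t, y s)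
        + q * (∫ s in (0 : ℝ)..t, y (s - 1)) + r t) :
    ∃ C, ∀ t ≥ (0 : ℝ), y t ≤ C * Real.exp (lam * t) := by
  obtain ⟨R, hR⟩ := hr
  have hR0 : 0 ≤ R := le_trans (abs_nonneg _) (hR 0 le_rfl)
  obtain ⟨D, hDdef⟩ : ∃ D : ℝ, D = lam - p - q * Real.exp (-lam) := ⟨_, rfl⟩
  have hDpos : 0 < D := hDdef ▸ hchar
  obtain ⟨C, hCdef⟩ : ∃ C : ℝ, C = R * lam / D + R + 1 := ⟨_, rfl⟩
  have hRD : R * lam / D * D = R * lam := div_mul_cancel₀ _ hDpos.ne'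
  have hCR : R < C := by
    have : 0 ≤ R * lam / D := div_nonneg (mul_nonneg hR0 hlam.le) hDpos.le
    rw [hCdef]; linarith
  have hC0 : 0 < C := lt_of_le_of_lt hR0 hCR
  have hkey : C * (p + q * Real.exp (-lam)) + R * lam < C * lam := by
    nlinarith [hDpos, hR0, hRD, hCdef, hDdef]
  -- bound on r
  have hrbound : ∀ t ≥ (0:ℝ), r t ≤ R * Real.exp (lam * t) := by
    intro t ht
    have h1 := hR t ht
    rw [abs_mul, abs_of_pos (Real.exp_pos _)] at h1
    have h2 : |r t| ≤ R * Real.exp (lam * t) := by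
      have hE : Real.exp (-lam * t) * Real.exp (lam * t) = 1 := by
        rw [← Real.exp_add]; ring_nf; exact Real.exp_zero
      have := mul_le_mul_of_nonneg_right h1 (Real.exp_pos (lam * t)).le
      calc |r t| = |r t| * (Real.exp (-lam * t) * Real.exp (lam * t)) := by rw [hE, mul_one]
        _ = |r t| * Real.exp (-lam * t) * Real.exp (lam * t) := by ring
        _ ≤ R * Real.exp (lam * t) := this
    exact le_trans (le_abs_self _) h2
  by_contra hcon
  push_neg at hcon
  obtain ⟨t₀, ht₀, ht₀'⟩ := hcon C
  set S : Set ℝ := {t | 0 ≤ t ∧ C * Real.exp (lam * t) ≤ y t} with hSdef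
  have hSne : S.Nonempty := ⟨t₀, ht₀, ht₀'.le⟩
  have hSbdd : BddBelow S := ⟨0, fun x hx => hx.1⟩
  have hSclosed : IsClosed S := by
    have h1 : ContinuousOn (fun t => C * Real.exp (lam * t) - y t) (Set.Ici 0) := by
      exact ((continuous_const.mul ((Real.continuous_exp).comp
        (continuous_const.mul continuous_id))).continuousOn).sub hy_cont
    have h2 := h1.preimage_isClosed_of_isClosed (t := Set.Iic (0:ℝ)) isClosed_Ici isClosed_Iic
    convert h2 using 1
    ext t
    simp only [hSdef, Set.mem_setOf_eq, Set.mem_inter_iff, Set.mem_Ici, Set.mem_preimage,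
      Set.mem_Iic, sub_nonpos]
  set T := sInf S with hTdef
  have hTS : T ∈ S := hSclosed.csInf_mem hSne hSbdd
  have hT0 : 0 ≤ T := hTS.1
  have hyT : C * Real.exp (lam * T) ≤ y T := hTS.2
  -- T > 0
  have hTpos : 0 < T := by
    rcases hT0.lt_or_eq with h | h
    · exact h
    · exfalso
      have h0 := hineq 0 le_rfl
      simp only [intervalIntegral.integral_same, mul_zero, zero_add] at h0
      have hr0 : r 0 ≤ R * Real.exp (lam * 0) := hrbound 0 le_rfl
      rw [mul_zero, Real.exp_zero, mul_one] at hr0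
      have := hyT
      rw [← h, mul_zero, Real.exp_zero, mul_one] at this
      linarith
  -- below T the bound holds
  have hbelow : ∀ s, 0 ≤ s → s < T → y s ≤ C * Real.exp (lam * s) := by
    intro s hs hsT
    by_contra hcontra
    push_neg at hcontra
    have : s ∈ S := ⟨hs, hcontra.le⟩
    exact absurd (csInf_le hSbdd this) (not_le.mpr hsT)
  have hbelow' : ∀ s ∈ Set.Icc (0:ℝ) T, y (s - 1) ≤ C * Real.exp (lam * (s - 1)) := by
    intro s hs
    rcases lt_or_ge (s - 1) 0 with h | h
    · rw [hy0 (s - 1) ⟨by linarith [hs.1], h⟩]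
      positivity
    · exact hbelow (s - 1) h (by linarith [hs.2])
  -- integrability of y
  have hyint : IntervalIntegrable y volume 0 T := by
    apply ContinuousOn.intervalIntegrable
    rw [Set.uIcc_of_le hT0]
    exact hy_cont.mono (fun x hx => hx.1)
  -- a.e. zero of shifted y on small intervals
  have haez : ∀ m : ℝ, m ≤ 1 → (fun s => y (s - 1)) =ᵐ[volume.restrict (Set.Ioc 0 m)]
      (fun _ => (0:ℝ)) := by
    intro m hm
    rw [Filter.EventuallyEq, ae_restrict_iff' measurableSet_Ioc, MeasureTheory.ae_iff]
    refine measure_mono_null ?_ (measure_singleton (1:ℝ))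
    · intro s hs
      simp only [Set.mem_setOf_eq, not_forall] at hs
      obtain ⟨hsm, hsne⟩ := hs
      simp only [Set.mem_singleton_iff]
      by_contra hs1
      rcases lt_or_ge s 1 with h | h
      · exact hsne (hy0 (s - 1) ⟨by linarith [hsm.1], by linarith⟩)
      · have : s = 1 := le_antisymm (le_trans hsm.2 hm) h
        exact hs1 this
  -- integrability of shifted y
  have hgint : IntervalIntegrable (fun s => y (s - 1)) volume 0 T := by
    rcases le_or_gt T 1 with h | h
    · rw [intervalIntegrable_iff, Set.uIoc_of_le hT0]
      exact (integrableOn_zero).congr (haez T h).symm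
    · have h01 : IntervalIntegrable (fun s => y (s - 1)) volume 0 1 := by
        rw [intervalIntegrable_iff, Set.uIoc_of_le zero_le_one]
        exact (integrableOn_zero).congr (haez 1 le_rfl).symm
      have h1T : IntervalIntegrable (fun s => y (s - 1)) volume 1 T := by
        apply ContinuousOn.intervalIntegrable
        rw [Set.uIcc_of_le h.le]
        apply hy_cont.comp (Continuous.continuousOn (continuous_id.sub continuous_const))
        intro x hx
        simp only [Set.mem_Ici, Pi.sub_apply, id_eq]
        linarith [hx.1]
      exact h01.trans h1T
  -- integrability of exponentials
  have hexpint : ∀ c : ℝ, IntervalIntegrable (fun s => c * Real.exp (lam * s)) volume 0 T :=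
    fun c => (continuous_const.mul (Real.continuous_exp.comp (continuous_const.mul continuous_id))).intervalIntegrable 0 T
  have hexpint' : IntervalIntegrable (fun s => C * Real.exp (lam * (s - 1))) volume 0 T :=
    (continuous_const.mul (Real.continuous_exp.comp
      (continuous_const.mul (continuous_id.sub continuous_const)))).intervalIntegrable 0 T
  -- value of exponential integral
  have hIexp : ∫ s in (0:ℝ)..T, Real.exp (lam * s) = (Real.exp (lam * T) - 1) / lam := by
    rw [intervalIntegral.integral_comp_mul_left (fun x => Real.exp x) hlam.ne']
    rw [integral_exp]
    simp [mul_zero, Real.exp_zero, smul_eq_mul]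
    ring
  have hIexp_le : ∫ s in (0:ℝ)..T, C * Real.exp (lam * s) ≤ C * Real.exp (lam * T) / lam := by
    rw [intervalIntegral.integral_const_mul, hIexp, mul_div_assoc]
    apply mul_le_mul_of_nonneg_left _ hC0.le
    exact (div_le_div_iff_of_pos_right hlam).mpr (by linarith [Real.exp_pos (lam * T)])
  -- bound the first integral (a.e., since it may fail at T)
  have hI1 : ∫ s in (0:ℝ)..T, y s ≤ C * Real.exp (lam * T) / lam := by
    have hmono : (∫ s in (0:ℝ)..T, y s) ≤ ∫ s in (0:ℝ)..T, C * Real.exp (lam * s) := by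
      apply intervalIntegral.integral_mono_ae_restrict hT0 hyint (hexpint C)
      rw [Filter.EventuallyLE, ae_restrict_iff' measurableSet_Icc, MeasureTheory.ae_iff]
      refine measure_mono_null ?_ (measure_singleton T)
      · intro s hs
        simp only [Set.mem_setOf_eq, not_forall] at hs
        obtain ⟨hsm, hsne⟩ := hs
        simp only [Set.mem_singleton_iff]
        by_contra hsT
        exact hsne (hbelow s hsm.1 (lt_of_le_of_ne hsm.2 hsT))
    linarith [hIexp_le]
  -- bound the second integral
  have hI2 : ∫ s in (0:ℝ)..T, y (s - 1) ≤
      C * Real.exp (-lam) * Real.exp (lam * T) / lam := by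
    have hmono : (∫ s in (0:ℝ)..T, y (s - 1)) ≤
        ∫ s in (0:ℝ)..T, C * Real.exp (lam * (s - 1)) := by
      apply intervalIntegral.integral_mono_on hT0 hgint hexpint'
      exact hbelow'
    have heq : ∀ s : ℝ, C * Real.exp (lam * (s - 1))
        = (C * Real.exp (-lam)) * Real.exp (lam * s) := by
      intro s
      rw [mul_assoc, ← Real.exp_add]
      ring_nf
    have : (∫ s in (0:ℝ)..T, C * Real.exp (lam * (s - 1)))
        = ∫ s in (0:ℝ)..T, (C * Real.exp (-lam)) * Real.exp (lam * s) := by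
      apply intervalIntegral.integral_congr
      intro s _
      exact heq s
    rw [this, intervalIntegral.integral_const_mul, hIexp] at hmono
    have hfin : C * Real.exp (-lam) * ((Real.exp (lam * T) - 1) / lam)
        ≤ C * Real.exp (-lam) * Real.exp (lam * T) / lam := by
      rw [mul_div_assoc]
      apply mul_le_mul_of_nonneg_left _ (mul_nonneg hC0.le (Real.exp_pos _).le)
      exact (div_le_div_iff_of_pos_right hlam).mpr (by linarith [Real.exp_pos (lam * T)])
    linarith
  -- final contradiction
  have hfin := hineq T hT0
  have hrT := hrbound T hT0
  set E := Real.exp (lam * T) with hE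
  have hE1 : (1:ℝ) ≤ E := Real.one_le_exp (by positivity)
  have hEpos : 0 < E := lt_of_lt_of_le one_pos hE1
  have hchain : y T ≤ p * (C * E / lam) + q * (C * Real.exp (-lam) * E / lam) + R * E := by
    have := mul_le_mul_of_nonneg_left hI1 hp
    have := mul_le_mul_of_nonneg_left hI2 hq
    linarith
  have hcontra : C * E ≤ p * (C * E / lam) + q * (C * Real.exp (-lam) * E / lam) + R * E :=
    le_trans hyT hchain
  rw [div_eq_mul_inv, div_eq_mul_inv] at hcontra
  have h3 := mul_le_mul_of_nonneg_left hcontra hlam.le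
  have h4 : lam * (p * (C * E * lam⁻¹) + q * (C * Real.exp (-lam) * E * lam⁻¹) + R * E)
      = (C * (p + q * Real.exp (-lam)) + R * lam) * E := by
    field_simp
  rw [h4] at h3
  have h5 : (C * (p + q * Real.exp (-lam)) + R * lam) * E < C * lam * E :=
    mul_lt_mul_of_pos_right hkey hEpos
  have h6 : lam * (C * E) = C * lam * E := by ring
  linarith
end

section
/- With Z, P as above (‖Z(t)‖ ≤ C₃e^{βt}, β < 0; ‖P(t) − P_∞‖ ≤ 2K₂e^{αt} with α < 0, α ≠ β, for a constant vector P_∞), the convolution M̂(t) = ∫₀ᵗ Z(s)P(t−s) ds converges exponentially to M̂_∞ = ∫₀^∞ Z(s)P_∞ ds: ‖M̂(t) − M̂_∞‖ ≤ C₃(‖P_∞‖/|β| + 4K₂/|α−β|) e^{t·max{α,β}} for all t ≥ 0. -/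
open MeasureTheory Set

lemma expDeriv (c : ℝ) (hc : c ≠ 0) (x : ℝ) :
    HasDerivAt (fun s => Real.exp (c * s) / c) (Real.exp (c * x)) x := by
  have h := (((hasDerivAt_id x).const_mul c).exp).div_const c
  simpa [mul_div_cancel_right₀ _ hc] using h

lemma expIntIoi (b t : ℝ) (hb : b < 0) :
    ∫ s in Ioi t, Real.exp (b * s) = Real.exp (b * t) / (-b) := by
  have hint : IntegrableOn (fun s => Real.exp (b * s)) (Ioi t) := by
    have := exp_neg_integrableOn_Ioi t (neg_pos.2 hb)
    simpa using this
  have htend : Filter.Tendsto (fun s => Real.exp (b * s) / b) Filter.atTop (nhds 0) := by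
    have h2 : Filter.Tendsto (fun s : ℝ => Real.exp (b * s)) Filter.atTop (nhds 0) := by
      have hmul : Filter.Tendsto (fun s : ℝ => b * s) Filter.atTop Filter.atBot :=
        Filter.Tendsto.const_mul_atTop_of_neg hb Filter.tendsto_id
      exact Real.tendsto_exp_atBot.comp hmul
    simpa using h2.div_const b
  have := integral_Ioi_of_hasDerivAt_of_tendsto'
    (f := fun s => Real.exp (b * s) / b) (f' := fun s => Real.exp (b * s))
    (fun x _ => expDeriv b hb.ne x) hint htend
  rw [this]; ring

lemma expIntIoc (c a b : ℝ) (hc : c ≠ 0) :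
    ∫ s in a..b, Real.exp (c * s) = (Real.exp (c * b) - Real.exp (c * a)) / c := by
  have := intervalIntegral.integral_eq_sub_of_hasDerivAt
    (f := fun s => Real.exp (c * s) / c) (f' := fun s => Real.exp (c * s))
    (fun x _ => expDeriv c hc x)
    ((Real.continuous_exp.comp (continuous_const.mul continuous_id)).intervalIntegrable a b)
  rw [this, div_sub_div_same]

lemma scalarBound (α β t : ℝ) (hα : α < 0) (hβ : β < 0) (hne : α ≠ β) (ht : 0 ≤ t) :
    Real.exp (α * t) * ((Real.exp ((β - α) * t) - 1) / (β - α))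
      ≤ 2 / |α - β| * Real.exp (t * max α β) := by
  rcases lt_or_gt_of_ne hne with h | h
  · have hb : 0 < β - α := by linarith
    have habs : |α - β| = β - α := by rw [abs_of_neg (by linarith)]; ring
    rw [habs, max_eq_right h.le]
    have hE : Real.exp (α * t) * Real.exp ((β - α) * t) = Real.exp (t * β) := by
      rw [← Real.exp_add]; ring_nf
    rw [mul_div_assoc', div_mul_eq_mul_div]
    apply (div_le_div_iff_of_pos_right hb).2
    nlinarith [Real.exp_pos (α * t), Real.exp_pos (t * β)]
  · have hb : 0 < α - β := by linarith
    have habs : |α - β| = α - β := abs_of_pos hb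
    have hX := Real.exp_pos ((β - α) * t)
    have hle : Real.exp ((β - α) * t) ≤ 1 := Real.exp_le_one_iff.2 (by nlinarith)
    have key : (Real.exp ((β - α) * t) - 1) / (β - α)
        = (1 - Real.exp ((β - α) * t)) / (α - β) := by
      rw [div_eq_div_iff (by linarith : β - α < 0).ne hb.ne']; ring
    rw [key, habs, max_eq_left h.le, mul_div_assoc', div_mul_eq_mul_div]
    apply (div_le_div_iff_of_pos_right hb).2
    have hc : Real.exp (t * α) = Real.exp (α * t) := by rw [mul_comm]
    nlinarith [Real.exp_pos (α * t)]

lemma mulVecAbs (M : Matrix (Fin 2) (Fin 2) ℝ) (v : Fin 2 → ℝ) :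
    ∑ i, |M.mulVec v i| ≤ (∑ i, ∑ j, |M i j|) * ∑ j, |v j| := by
  calc ∑ i, |M.mulVec v i| ≤ ∑ i, ∑ j, |M i j| * |v j| := by
        refine Finset.sum_le_sum fun i _ => ?_
        calc |M.mulVec v i| = |∑ j, M i j * v j| := by simp [Matrix.mulVec, dotProduct]
          _ ≤ ∑ j, |M i j * v j| := Finset.abs_sum_le_sum_abs _ _
          _ = ∑ j, |M i j| * |v j| := by simp [abs_mul]
    _ ≤ ∑ i, ∑ j, |M i j| * ∑ k, |v k| := by
        refine Finset.sum_le_sum fun i _ => Finset.sum_le_sum fun j _ => ?_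
        exact mul_le_mul_of_nonneg_left
          (Finset.single_le_sum (f := fun k => |v k|) (fun k _ => abs_nonneg _)
            (Finset.mem_univ j)) (abs_nonneg _)
    _ = (∑ i, ∑ j, |M i j|) * ∑ j, |v j| := by
        simp only [Fin.sum_univ_two]
        ring

theorem stmt13 (Z : ℝ → Matrix (Fin 2) (Fin 2) ℝ) (P : ℝ → Fin 2 → ℝ)
    (Pinf : Fin 2 → ℝ)
    (C₃ K₂ α β : ℝ) (hC₃ : 0 < C₃) (hK₂ : 0 < K₂)
    (hβ : β < 0) (hα : α < 0) (hαβ : α ≠ β)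
    (hZm : ∀ i j, Measurable fun t => Z t i j)
    (hPm : ∀ i, Measurable fun t => P t i)
    (hZ : ∀ t ≥ (0 : ℝ), ∑ i, ∑ j, |Z t i j| ≤ C₃ * Real.exp (β * t))
    (hP : ∀ t ≥ (0 : ℝ), ∑ i, |P t i - Pinf i| ≤ 2 * K₂ * Real.exp (α * t)) :
    ∀ t ≥ (0 : ℝ),
      ∑ i, |(∫ s in (0 : ℝ)..t, (Z s).mulVec (P (t - s)) i)
          - ∫ s in Set.Ioi (0 : ℝ), (Z s).mulVec Pinf i|
        ≤ C₃ * ((∑ i, |Pinf i|) / |β| + 4 * K₂ / |α - β|) * Real.exp (t * max α β) := by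
  intro t ht
  set S := ∑ j, |Pinf j| with hS
  have hS0 : 0 ≤ S := Finset.sum_nonneg fun j _ => abs_nonneg _
  -- pointwise vector bound
  have hvec : ∀ (v : Fin 2 → ℝ) (s : ℝ), 0 ≤ s →
      ∑ i, |(Z s).mulVec v i| ≤ C₃ * Real.exp (β * s) * ∑ j, |v j| := by
    intro v s hs
    refine (mulVecAbs (Z s) v).trans ?_
    exact mul_le_mul_of_nonneg_right (hZ s hs)
      (Finset.sum_nonneg fun j _ => abs_nonneg _)
  have hone : ∀ (v : Fin 2 → ℝ) (i : Fin 2) (s : ℝ), 0 ≤ s →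
      |(Z s).mulVec v i| ≤ C₃ * Real.exp (β * s) * ∑ j, |v j| := by
    intro v i s hs
    exact (Finset.single_le_sum (fun k _ => abs_nonneg ((Z s).mulVec v k))
      (Finset.mem_univ i)).trans (hvec v s hs)
  -- measurability
  have hgm : ∀ i, Measurable fun s => (Z s).mulVec Pinf i := by
    intro i
    simp only [Matrix.mulVec, dotProduct]
    exact Finset.measurable_sum _ fun j _ => (hZm i j).mul_const _
  have hfm : ∀ i, Measurable fun s => (Z s).mulVec (P (t - s)) i := by
    intro i
    simp only [Matrix.mulVec, dotProduct]
    exact Finset.measurable_sum _ fun j _ =>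
      (hZm i j).mul ((hPm j).comp (measurable_const.sub measurable_id))
  -- P is bounded
  have hPsum : ∀ u, 0 ≤ u → ∑ j, |P u j| ≤ S + 2 * K₂ := by
    intro u hu
    have h1 := hP u hu
    have h2 : Real.exp (α * u) ≤ 1 := Real.exp_le_one_iff.2 (by nlinarith)
    have h3 : ∑ j, |P u j| ≤ (∑ j, |P u j - Pinf j|) + ∑ j, |Pinf j| := by
      rw [← Finset.sum_add_distrib]
      refine Finset.sum_le_sum fun j _ => ?_
      calc |P u j| = |(P u j - Pinf j) + Pinf j| := by ring_nf
        _ ≤ |P u j - Pinf j| + |Pinf j| := abs_add_le _ _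
    nlinarith
  -- integrability of g on Ioi 0
  have hIg : ∀ i, IntegrableOn (fun s => (Z s).mulVec Pinf i) (Ioi 0) := by
    intro i
    have hdom : IntegrableOn (fun s => C₃ * S * Real.exp (β * s)) (Ioi 0) := by
      have := (exp_neg_integrableOn_Ioi (0:ℝ) (neg_pos.2 hβ)).const_mul (C₃ * S)
      simp at this; exact this
    refine Integrable.mono' hdom ((hgm i).aestronglyMeasurable) ?_
    filter_upwards [ae_restrict_mem measurableSet_Ioi] with s hs
    rw [Real.norm_eq_abs]
    calc |(Z s).mulVec Pinf i| ≤ C₃ * Real.exp (β * s) * S := hone _ _ _ (mem_Ioi.1 hs).le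
      _ = C₃ * S * Real.exp (β * s) := by ring
  -- integrability of f on Ioc 0 t
  have hIf : ∀ i, IntegrableOn (fun s => (Z s).mulVec (P (t - s)) i) (Ioc 0 t) := by
    intro i
    have hdom : IntegrableOn (fun _ : ℝ => C₃ * (S + 2 * K₂)) (Ioc 0 t) :=
      integrableOn_const measure_Ioc_lt_top.ne
    refine Integrable.mono' hdom ((hfm i).aestronglyMeasurable) ?_
    filter_upwards [ae_restrict_mem measurableSet_Ioc] with s hs
    rw [Real.norm_eq_abs]
    have hs0 : 0 ≤ s := hs.1.le
    have hts : 0 ≤ t - s := by linarith [hs.2]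
    have he1 : Real.exp (β * s) ≤ 1 := Real.exp_le_one_iff.2 (by nlinarith)
    calc |(Z s).mulVec (P (t - s)) i| ≤ C₃ * Real.exp (β * s) * ∑ j, |P (t - s) j| :=
          hone _ _ _ hs0
      _ ≤ C₃ * 1 * (S + 2 * K₂) := by
          apply mul_le_mul ?_ (hPsum _ hts) (Finset.sum_nonneg fun j _ => abs_nonneg _)
            (by positivity)
          nlinarith
      _ = C₃ * (S + 2 * K₂) := by ring
  have hIgc : ∀ i, IntegrableOn (fun s => (Z s).mulVec Pinf i) (Ioc 0 t) :=
    fun i => (hIg i).mono_set Ioc_subset_Ioi_self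
  have hIgt : ∀ i, IntegrableOn (fun s => (Z s).mulVec Pinf i) (Ioi t) :=
    fun i => (hIg i).mono_set (Ioi_subset_Ioi ht)
  -- split the improper integral
  have hsplit : ∀ i, (∫ s in Ioi (0:ℝ), (Z s).mulVec Pinf i)
      = (∫ s in Ioc 0 t, (Z s).mulVec Pinf i) + ∫ s in Ioi t, (Z s).mulVec Pinf i := by
    intro i
    rw [← setIntegral_union (Ioc_disjoint_Ioi le_rfl) measurableSet_Ioi (hIgc i) (hIgt i),
      Ioc_union_Ioi_eq_Ioi ht]
  have hdiff : ∀ i, (∫ s in (0:ℝ)..t, (Z s).mulVec (P (t - s)) i)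
        - (∫ s in Ioi (0:ℝ), (Z s).mulVec Pinf i)
      = (∫ s in Ioc 0 t, ((Z s).mulVec (P (t - s)) i - (Z s).mulVec Pinf i))
        - ∫ s in Ioi t, (Z s).mulVec Pinf i := by
    intro i
    rw [intervalIntegral.integral_of_le ht, hsplit i, integral_sub (hIf i) (hIgc i)]
    ring
  -- the two dominating integrals
  have hαβ' : β - α ≠ 0 := sub_ne_zero.2 fun hh => hαβ hh.symm
  have habs_int : ∀ i, IntegrableOn
      (fun s => |(Z s).mulVec (P (t - s)) i - (Z s).mulVec Pinf i|) (Ioc 0 t) :=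
    fun i => ((hIf i).sub (hIgc i)).abs
  have habs_int' : ∀ i, IntegrableOn (fun s => |(Z s).mulVec Pinf i|) (Ioi t) :=
    fun i => (hIgt i).abs
  have hdom1 : IntegrableOn
      (fun s => 2 * C₃ * K₂ * Real.exp (α * t) * Real.exp ((β - α) * s)) (Ioc 0 t) :=
    (Continuous.integrableOn_Ioc (by fun_prop))
  have hdom2 : IntegrableOn (fun s => C₃ * S * Real.exp (β * s)) (Ioi t) := by
    have := (exp_neg_integrableOn_Ioi t (neg_pos.2 hβ)).const_mul (C₃ * S)
    simp at this; exact this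
  -- pointwise bound on the difference
  have hsub : ∀ s : ℝ, s ∈ Ioc 0 t →
      ∑ i, |(Z s).mulVec (P (t - s)) i - (Z s).mulVec Pinf i|
        ≤ 2 * C₃ * K₂ * Real.exp (α * t) * Real.exp ((β - α) * s) := by
    intro s hs
    have hs0 : 0 ≤ s := hs.1.le
    have hts : 0 ≤ t - s := by linarith [hs.2]
    have heq : ∀ i, (Z s).mulVec (P (t - s)) i - (Z s).mulVec Pinf i
        = (Z s).mulVec (fun j => P (t - s) j - Pinf j) i := by
      intro i
      simp only [Matrix.mulVec, dotProduct, Fin.sum_univ_two]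
      ring
    calc ∑ i, |(Z s).mulVec (P (t - s)) i - (Z s).mulVec Pinf i|
        = ∑ i, |(Z s).mulVec (fun j => P (t - s) j - Pinf j) i| := by
          refine Finset.sum_congr rfl fun i _ => ?_; rw [heq i]
      _ ≤ C₃ * Real.exp (β * s) * ∑ j, |P (t - s) j - Pinf j| := hvec _ _ hs0
      _ ≤ C₃ * Real.exp (β * s) * (2 * K₂ * Real.exp (α * (t - s))) :=
          mul_le_mul_of_nonneg_left (hP _ hts) (by positivity)
      _ = 2 * C₃ * K₂ * (Real.exp (β * s) * Real.exp (α * (t - s))) := by ring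
      _ = 2 * C₃ * K₂ * (Real.exp (α * t) * Real.exp ((β - α) * s)) := by
          rw [← Real.exp_add, ← Real.exp_add]; ring_nf
      _ = 2 * C₃ * K₂ * Real.exp (α * t) * Real.exp ((β - α) * s) := by ring
  have hgbd : ∀ s : ℝ, s ∈ Ioi t →
      ∑ i, |(Z s).mulVec Pinf i| ≤ C₃ * S * Real.exp (β * s) := by
    intro s hs
    have hs0 : 0 ≤ s := le_trans ht (mem_Ioi.1 hs).le
    calc ∑ i, |(Z s).mulVec Pinf i| ≤ C₃ * Real.exp (β * s) * S := hvec _ _ hs0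
      _ = C₃ * S * Real.exp (β * s) := by ring
  -- main estimate
  have main : ∑ i, |(∫ s in (0:ℝ)..t, (Z s).mulVec (P (t - s)) i)
        - ∫ s in Ioi (0:ℝ), (Z s).mulVec Pinf i|
      ≤ (∫ s in Ioc (0:ℝ) t, 2 * C₃ * K₂ * Real.exp (α * t) * Real.exp ((β - α) * s))
        + ∫ s in Ioi t, C₃ * S * Real.exp (β * s) := by
    calc ∑ i, |(∫ s in (0:ℝ)..t, (Z s).mulVec (P (t - s)) i)
          - ∫ s in Ioi (0:ℝ), (Z s).mulVec Pinf i|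
        ≤ ∑ i, ((∫ s in Ioc (0:ℝ) t, |(Z s).mulVec (P (t - s)) i - (Z s).mulVec Pinf i|)
            + ∫ s in Ioi t, |(Z s).mulVec Pinf i|) := by
          refine Finset.sum_le_sum fun i _ => ?_
          rw [hdiff i]
          refine (abs_sub _ _).trans (add_le_add ?_ ?_)
          · simpa [Real.norm_eq_abs] using
              norm_integral_le_integral_norm (μ := volume.restrict (Ioc (0:ℝ) t))
                (fun s => (Z s).mulVec (P (t - s)) i - (Z s).mulVec Pinf i)
          · simpa [Real.norm_eq_abs] using
              norm_integral_le_integral_norm (μ := volume.restrict (Ioi t))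
                (fun s => (Z s).mulVec Pinf i)
      _ = (∫ s in Ioc (0:ℝ) t, ∑ i, |(Z s).mulVec (P (t - s)) i - (Z s).mulVec Pinf i|)
            + ∫ s in Ioi t, ∑ i, |(Z s).mulVec Pinf i| := by
          rw [Finset.sum_add_distrib,
            integral_finset_sum _ (fun i _ => habs_int i),
            integral_finset_sum _ (fun i _ => habs_int' i)]
      _ ≤ (∫ s in Ioc (0:ℝ) t, 2 * C₃ * K₂ * Real.exp (α * t) * Real.exp ((β - α) * s))
            + ∫ s in Ioi t, C₃ * S * Real.exp (β * s) := by
          refine add_le_add ?_ ?_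
          · exact setIntegral_mono_on
              (integrable_finset_sum _ fun i _ => habs_int i) hdom1 measurableSet_Ioc hsub
          · exact setIntegral_mono_on
              (integrable_finset_sum _ fun i _ => habs_int' i) hdom2 measurableSet_Ioi hgbd
  -- compute / bound the two integrals
  have hI1 : (∫ s in Ioc (0:ℝ) t, 2 * C₃ * K₂ * Real.exp (α * t) * Real.exp ((β - α) * s))
      ≤ 2 * C₃ * K₂ * (2 / |α - β| * Real.exp (t * max α β)) := by
    rw [integral_const_mul, ← intervalIntegral.integral_of_le ht, expIntIoc _ _ _ hαβ',
      show Real.exp ((β - α) * 0) = 1 by simp]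
    calc 2 * C₃ * K₂ * Real.exp (α * t) * ((Real.exp ((β - α) * t) - 1) / (β - α))
        = 2 * C₃ * K₂ * (Real.exp (α * t) * ((Real.exp ((β - α) * t) - 1) / (β - α))) := by
          ring
      _ ≤ 2 * C₃ * K₂ * (2 / |α - β| * Real.exp (t * max α β)) :=
          mul_le_mul_of_nonneg_left (scalarBound α β t hα hβ hαβ ht) (by positivity)
  have hI2 : (∫ s in Ioi t, C₃ * S * Real.exp (β * s))
      ≤ C₃ * S / |β| * Real.exp (t * max α β) := by
    rw [integral_const_mul, expIntIoi _ _ hβ]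
    have hE : Real.exp (β * t) ≤ Real.exp (t * max α β) := by
      apply Real.exp_le_exp.2
      calc β * t = t * β := mul_comm _ _
        _ ≤ t * max α β := mul_le_mul_of_nonneg_left (le_max_right _ _) ht
    have hβpos : 0 < -β := by linarith
    rw [abs_of_neg hβ]
    calc C₃ * S * (Real.exp (β * t) / (-β)) = C₃ * S / (-β) * Real.exp (β * t) := by ring
      _ ≤ C₃ * S / (-β) * Real.exp (t * max α β) :=
          mul_le_mul_of_nonneg_left hE (by positivity)
  calc ∑ i, |(∫ s in (0:ℝ)..t, (Z s).mulVec (P (t - s)) i)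
        - ∫ s in Ioi (0:ℝ), (Z s).mulVec Pinf i|
      ≤ _ := main
    _ ≤ 2 * C₃ * K₂ * (2 / |α - β| * Real.exp (t * max α β))
        + C₃ * S / |β| * Real.exp (t * max α β) := add_le_add hI1 hI2
    _ = C₃ * (S / |β| + 4 * K₂ / |α - β|) * Real.exp (t * max α β) := by ring
end

section
/- If X : [0,∞) → Mat_N(ℝ) satisfies ‖X(t)‖ ≤ K̄e^{αt} with α < 0 and P : [0,∞) → Mat_N(ℝ) satisfies ‖P(s)‖ ≤ (c₀ + c₁ e^{αs})² with c₀, c₁ ≥ 0, then F(t) = ∫₀ᵗ X(t−s)ᵀ P(s) X(t−s) ds satisfies ‖F(t)‖ ≤ K₁(1 − e^{2αt}) for some constant K₁ > 0 depending only on K̄, c₀, c₁, α. -/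
open Matrix

open MeasureTheory intervalIntegral Real in
private lemma entry_norm_mul' {n : ℕ} (A B : Matrix (Fin n) (Fin n) ℝ) :
    ∑ i, ∑ j, |(A * B) i j| ≤ (∑ i, ∑ j, |A i j|) * (∑ i, ∑ j, |B i j|) := by
  have hB : ∀ j, ∑ k, |B j k| ≤ ∑ j', ∑ k, |B j' k| := by
    intro j
    exact Finset.single_le_sum (f := fun j' => ∑ k, |B j' k|)
      (fun j' _ => Finset.sum_nonneg fun k _ => abs_nonneg _) (Finset.mem_univ j)
  calc ∑ i, ∑ k, |(A * B) i k|
      ≤ ∑ i, ∑ k, ∑ j, |A i j| * |B j k| := by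
        apply Finset.sum_le_sum; intro i _
        apply Finset.sum_le_sum; intro k _
        simpa [Matrix.mul_apply, abs_mul] using
          Finset.abs_sum_le_sum_abs (fun j => A i j * B j k) Finset.univ
    _ = ∑ i, ∑ j, |A i j| * ∑ k, |B j k| := by
        congr 1; ext i
        rw [Finset.sum_comm]
        simp [Finset.mul_sum]
    _ ≤ ∑ i, ∑ j, |A i j| * (∑ j', ∑ k, |B j' k|) := by
        apply Finset.sum_le_sum; intro i _
        apply Finset.sum_le_sum; intro j _
        exact mul_le_mul_of_nonneg_left (hB j) (abs_nonneg _)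
    _ = (∑ i, ∑ j, |A i j|) * (∑ i, ∑ j, |B i j|) := by
        rw [Finset.sum_mul]; congr 1; ext i; rw [Finset.sum_mul]

open MeasureTheory intervalIntegral Real in
theorem stmt14 (Kb c₀ c₁ α : ℝ) (hK : 1 ≤ Kb) (hc₀ : 0 ≤ c₀) (hc₁ : 0 ≤ c₁) (hα : α < 0) :
    ∃ K₁ > (0 : ℝ), ∀ (n : ℕ) (X P : ℝ → Matrix (Fin n) (Fin n) ℝ),
      (∀ t ≥ (0 : ℝ), ∑ i, ∑ j, |X t i j| ≤ Kb * Real.exp (α * t)) →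
      (∀ s ≥ (0 : ℝ), ∑ i, ∑ j, |P s i j| ≤ (c₀ + c₁ * Real.exp (α * s)) ^ 2) →
      ∀ t > (0 : ℝ), ∑ i, ∑ j,
        |∫ s in (0 : ℝ)..t, ((X (t - s))ᵀ * P s * X (t - s)) i j|
          ≤ K₁ * (1 - Real.exp (2 * α * t)) := by
  set C : ℝ := Kb ^ 2 * (c₀ + c₁) ^ 2 with hC
  have hC0 : 0 ≤ C := by positivity
  have h2α : (0:ℝ) < -(2 * α) := by linarith
  refine ⟨C / (-(2 * α)) + 1, by positivity, ?_⟩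
  intro n X P hX hP t ht
  have ht' : (0 : ℝ) ≤ t := le_of_lt ht
  -- the integrand, entrywise
  set F : Fin n × Fin n → ℝ → ℝ :=
    fun p s => |((X (t - s))ᵀ * P s * X (t - s)) p.1 p.2| with hF
  -- dominating function
  set g : ℝ → ℝ := fun s => C * Real.exp (2 * α * t) * Real.exp (-(2 * α) * s) with hg
  have hg0 : ∀ s, 0 ≤ g s := by intro s; positivity
  have hgint : IntervalIntegrable g volume 0 t := by
    exact (continuous_const.mul (Real.continuous_exp.comp
      (continuous_const.mul continuous_id))).intervalIntegrable 0 t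
  -- pointwise bound: the total entrywise sum at time s is ≤ g s
  have hpt : ∀ s ∈ Set.Icc (0 : ℝ) t, ∑ p : Fin n × Fin n, F p s ≤ g s := by
    intro s hs
    obtain ⟨hs0, hst⟩ := hs
    have hts : (0 : ℝ) ≤ t - s := by linarith
    have hXb := hX (t - s) hts
    have hPb := hP s hs0
    have hXT : ∑ i, ∑ j, |(X (t - s))ᵀ i j| = ∑ i, ∑ j, |X (t - s) i j| := by
      rw [Finset.sum_comm]; simp [Matrix.transpose_apply]
    have h1 : ∑ p : Fin n × Fin n, F p s
        = ∑ i, ∑ j, |((X (t - s))ᵀ * P s * X (t - s)) i j| := by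
      rw [Fintype.sum_prod_type]
    rw [h1]
    have h2 : ∑ i, ∑ j, |((X (t - s))ᵀ * P s * X (t - s)) i j|
        ≤ ((∑ i, ∑ j, |(X (t - s))ᵀ i j|) * (∑ i, ∑ j, |P s i j|))
            * (∑ i, ∑ j, |X (t - s) i j|) :=
      le_trans (entry_norm_mul' _ _)
        (mul_le_mul_of_nonneg_right (entry_norm_mul' _ _)
          (Finset.sum_nonneg fun i _ => Finset.sum_nonneg fun j _ => abs_nonneg _))
    have hXnn : (0 : ℝ) ≤ ∑ i, ∑ j, |X (t - s) i j| :=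
      Finset.sum_nonneg fun i _ => Finset.sum_nonneg fun j _ => abs_nonneg _
    have hPnn : (0 : ℝ) ≤ ∑ i, ∑ j, |P s i j| :=
      Finset.sum_nonneg fun i _ => Finset.sum_nonneg fun j _ => abs_nonneg _
    have hXe : (0 : ℝ) ≤ Kb * Real.exp (α * (t - s)) := by positivity
    have h3 : ((∑ i, ∑ j, |(X (t - s))ᵀ i j|) * (∑ i, ∑ j, |P s i j|))
            * (∑ i, ∑ j, |X (t - s) i j|)
        ≤ ((Kb * Real.exp (α * (t - s))) * (c₀ + c₁ * Real.exp (α * s)) ^ 2)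
            * (Kb * Real.exp (α * (t - s))) := by
      apply mul_le_mul _ (hX _ hts) hXnn (by positivity)
      rw [hXT]
      exact mul_le_mul (hX _ hts) hPb hPnn hXe
    refine le_trans h2 (le_trans h3 ?_)
    have he1 : Real.exp (α * s) ≤ 1 := by
      rw [Real.exp_le_one_iff]
      exact mul_nonpos_of_nonpos_of_nonneg (le_of_lt hα) hs0
    have h4 : (c₀ + c₁ * Real.exp (α * s)) ^ 2 ≤ (c₀ + c₁) ^ 2 := by
      apply pow_le_pow_left₀ (by positivity)
      nlinarith [Real.exp_pos (α * s)]
    have h5 : ((Kb * Real.exp (α * (t - s))) * (c₀ + c₁ * Real.exp (α * s)) ^ 2)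
            * (Kb * Real.exp (α * (t - s)))
        ≤ ((Kb * Real.exp (α * (t - s))) * (c₀ + c₁) ^ 2)
            * (Kb * Real.exp (α * (t - s))) := by
      apply mul_le_mul_of_nonneg_right _ hXe
      exact mul_le_mul_of_nonneg_left h4 hXe
    refine le_trans h5 (le_of_eq ?_)
    calc ((Kb * Real.exp (α * (t - s))) * (c₀ + c₁) ^ 2) * (Kb * Real.exp (α * (t - s)))
        = C * (Real.exp (α * (t - s)) * Real.exp (α * (t - s))) := by rw [hC]; ring
      _ = g s := by
          have harg : α * (t - s) + α * (t - s) = 2 * α * t + -(2 * α) * s := by ring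
          simp only [hg, ← Real.exp_add, harg, mul_assoc]
  -- each F p is nonneg
  have hFnn : ∀ p s, 0 ≤ F p s := fun p s => abs_nonneg _
  -- step 1: abs of integral ≤ integral of abs
  have hstep1 : ∑ i, ∑ j, |∫ s in (0:ℝ)..t, ((X (t - s))ᵀ * P s * X (t - s)) i j|
      ≤ ∑ p : Fin n × Fin n, ∫ s in (0:ℝ)..t, F p s := by
    rw [Fintype.sum_prod_type]
    apply Finset.sum_le_sum; intro i _
    apply Finset.sum_le_sum; intro j _
    exact abs_integral_le_integral_abs ht'
  -- step 2: sum of integrals ≤ integral of g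
  have hstep2 : ∑ p : Fin n × Fin n, ∫ s in (0:ℝ)..t, F p s
      ≤ ∫ s in (0:ℝ)..t, g s := by
    classical
    have key : ∀ p : Fin n × Fin n, ∃ G : ℝ → ℝ,
        (∫ s in (0:ℝ)..t, F p s) = (∫ s in (0:ℝ)..t, G s) ∧
        IntervalIntegrable G volume 0 t ∧ ∀ s, 0 ≤ G s ∧ G s ≤ F p s := by
      intro p
      by_cases h : IntervalIntegrable (F p) volume 0 t
      · exact ⟨F p, rfl, h, fun s => ⟨hFnn p s, le_refl _⟩⟩
      · refine ⟨fun _ => 0, ?_, intervalIntegrable_const, fun s => ⟨le_refl _, hFnn p s⟩⟩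
        rw [intervalIntegral.integral_undef h]
        simp
    choose G hG1 hG2 hG3 using key
    calc ∑ p : Fin n × Fin n, ∫ s in (0:ℝ)..t, F p s
        = ∑ p : Fin n × Fin n, ∫ s in (0:ℝ)..t, G p s := by
          exact Finset.sum_congr rfl fun p _ => hG1 p
      _ = ∫ s in (0:ℝ)..t, ∑ p : Fin n × Fin n, G p s := by
          rw [intervalIntegral.integral_finset_sum (fun p _ => hG2 p)]
      _ ≤ ∫ s in (0:ℝ)..t, g s := by
          have hint : IntervalIntegrable (fun s => ∑ p : Fin n × Fin n, G p s) volume 0 t := by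
            have h := IntervalIntegrable.sum (μ := volume) (a := 0) (b := t)
              (Finset.univ : Finset (Fin n × Fin n)) (fun p _ => hG2 p)
            have he : (∑ p : Fin n × Fin n, G p) = fun s => ∑ p : Fin n × Fin n, G p s := by
              funext s; simp
            rwa [he] at h
          apply intervalIntegral.integral_mono_on ht' hint hgint
          intro s hs
          refine le_trans ?_ (hpt s hs)
          exact Finset.sum_le_sum fun p _ => (hG3 p s).2
  -- step 3: compute / bound the integral of g
  have hne : -(2 * α) ≠ 0 := ne_of_gt h2α
  have hcomp : (∫ s in (0:ℝ)..t, Real.exp (-(2 * α) * s))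
      = (-(2 * α))⁻¹ * (Real.exp (-(2 * α) * t) - 1) := by
    rw [intervalIntegral.integral_comp_mul_left (fun x => Real.exp x) hne]
    simp [Real.exp_zero]
  have hstep3 : (∫ s in (0:ℝ)..t, g s) ≤ (C / (-(2 * α)) + 1) * (1 - Real.exp (2 * α * t)) := by
    have : (∫ s in (0:ℝ)..t, g s)
        = C * Real.exp (2 * α * t) * ((-(2 * α))⁻¹ * (Real.exp (-(2 * α) * t) - 1)) := by
      rw [← hcomp, ← intervalIntegral.integral_const_mul]
    rw [this]
    have hexp : Real.exp (2 * α * t) * Real.exp (-(2 * α) * t) = 1 := by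
      rw [← Real.exp_add]; ring_nf; exact Real.exp_zero
    have hlt1 : Real.exp (2 * α * t) < 1 := by
      rw [Real.exp_lt_one_iff]; nlinarith
    have heq : C * Real.exp (2 * α * t) * ((-(2 * α))⁻¹ * (Real.exp (-(2 * α) * t) - 1))
        = (C / (-(2 * α))) * (1 - Real.exp (2 * α * t)) := by
      calc C * Real.exp (2 * α * t) * ((-(2 * α))⁻¹ * (Real.exp (-(2 * α) * t) - 1))
          = (C / (-(2 * α))) * (Real.exp (2 * α * t) * Real.exp (-(2 * α) * t)
              - Real.exp (2 * α * t)) := by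
            rw [div_eq_mul_inv]; ring
        _ = (C / (-(2 * α))) * (1 - Real.exp (2 * α * t)) := by rw [hexp]
    rw [heq]
    apply mul_le_mul_of_nonneg_right _ (by linarith)
    linarith
  exact le_trans hstep1 (le_trans hstep2 hstep3)
end

section
/- Suppose m ≥ 1 and for j = n₀+1,…,m let a_j, b_j ∈ ℝ with a_j² + b_j² ≠ 0 and ω_j ∈ ℝ. Then for any ε > 0 sufficiently small, the set U₀ = {t ≥ 0 : sin(θ_j + ω_j t) > ε for all j = n₀+1,…,m} (with θ_j determined by sin θ_j = a_j/√(a_j²+b_j²), cos θ_j = b_j/√(a_j²+b_j²)) has infinite Lebesgue measure, provided such t exist for a common small ε. -/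
open Real MeasureTheory

/-- |sin x - sin y| ≤ |x - y| -/
private lemma sin_lip (x y : ℝ) : |Real.sin x - Real.sin y| ≤ |x - y| := by
  rw [Real.sin_sub_sin]
  have h1 : |Real.sin ((x - y) / 2)| ≤ |(x - y) / 2| := Real.abs_sin_le_abs
  have h2 : |Real.cos ((x + y) / 2)| ≤ 1 := Real.abs_cos_le_one _
  calc |2 * Real.sin ((x - y) / 2) * Real.cos ((x + y) / 2)|
      = 2 * |Real.sin ((x - y) / 2)| * |Real.cos ((x + y) / 2)| := by
        rw [abs_mul, abs_mul, abs_two]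
    _ ≤ 2 * |(x - y) / 2| * 1 := by
        apply mul_le_mul _ h2 (abs_nonneg _) (by positivity)
        exact mul_le_mul_of_nonneg_left h1 (by norm_num)
    _ = |x - y| := by rw [abs_div, abs_two]; ring

/-- Simultaneous recurrence of finitely many rotations: arbitrarily large natural
times τ at which each ω j * τ is within η of a multiple of 2π. -/
private lemma recur (m : ℕ) (ω : Fin m → ℝ) (η : ℝ) (hη : 0 < η) (N : ℕ) :
    ∃ τ : ℕ, N < τ ∧ ∀ j, ∃ k : ℤ, |ω j * τ - 2 * π * k| < η := by
  obtain ⟨K, hK⟩ := exists_nat_gt (2 * π / η)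
  have hπ : (0 : ℝ) < π := Real.pi_pos
  have hKpos : (0 : ℝ) < K := lt_of_le_of_lt (by positivity) hK
  have hfr : ∀ x : ℝ, (⌊Int.fract x * K⌋).toNat < K := by
    intro x
    have h1 : Int.fract x * K < K := by
      have := Int.fract_lt_one x
      calc Int.fract x * K < 1 * K := by
            exact mul_lt_mul_of_pos_right this hKpos
        _ = K := one_mul _
    have h2 : (⌊Int.fract x * K⌋ : ℝ) < K := lt_of_le_of_lt (Int.floor_le _) h1
    have h3 : ⌊Int.fract x * K⌋ < (K : ℤ) := by exact_mod_cast h2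
    have h4 : (0 : ℤ) < (K : ℤ) := by exact_mod_cast hKpos
    omega
  let g : ℕ → (Fin m → Fin K) := fun n j =>
    ⟨(⌊Int.fract (ω j * n / (2 * π)) * K⌋).toNat, hfr _⟩
  have : Finite (Fin m → Fin K) := inferInstance
  obtain ⟨y, hy⟩ := Finite.exists_infinite_fiber g
  have hyS : (g ⁻¹' {y}).Infinite := Set.infinite_coe_iff.mp hy
  obtain ⟨n₁, hn₁⟩ := hyS.nonempty
  obtain ⟨n₂, hn₂, hlt⟩ := hyS.exists_gt (n₁ + N)
  have hg : g n₁ = g n₂ := by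
    simp only [Set.mem_preimage, Set.mem_singleton_iff] at hn₁ hn₂
    rw [hn₁, hn₂]
  refine ⟨n₂ - n₁, by omega, ?_⟩
  intro j
  set x₁ := ω j * n₁ / (2 * π) with hx₁
  set x₂ := ω j * n₂ / (2 * π) with hx₂
  -- equal floors of fract * K
  have hfloor : ⌊Int.fract x₁ * K⌋ = ⌊Int.fract x₂ * K⌋ := by
    have h := congrFun hg j
    simp only [g, Fin.mk.injEq] at h
    rw [← hx₁, ← hx₂] at h
    have h1 : 0 ≤ ⌊Int.fract x₁ * (K : ℝ)⌋ := Int.floor_nonneg.2 (mul_nonneg (Int.fract_nonneg _) hKpos.le)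
    have h2 : 0 ≤ ⌊Int.fract x₂ * (K : ℝ)⌋ := Int.floor_nonneg.2 (mul_nonneg (Int.fract_nonneg _) hKpos.le)
    omega
  have hfrd : |Int.fract x₂ - Int.fract x₁| < 1 / K := by
    have h1 : (⌊Int.fract x₁ * K⌋ : ℝ) ≤ Int.fract x₁ * K := Int.floor_le _
    have h2 : Int.fract x₁ * K < ⌊Int.fract x₁ * K⌋ + 1 := Int.lt_floor_add_one _
    have h3 : (⌊Int.fract x₂ * K⌋ : ℝ) ≤ Int.fract x₂ * K := Int.floor_le _
    have h4 : Int.fract x₂ * K < ⌊Int.fract x₂ * K⌋ + 1 := Int.lt_floor_add_one _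
    rw [hfloor] at h1 h2
    have h5 : |Int.fract x₂ * K - Int.fract x₁ * K| < 1 := by
      rw [abs_lt]; constructor <;> linarith
    rw [lt_div_iff₀ hKpos, ← abs_of_pos hKpos, ← abs_mul]
    have he : (Int.fract x₂ - Int.fract x₁) * (K : ℝ) =
        Int.fract x₂ * K - Int.fract x₁ * K := by ring
    rw [he]
    exact h5
  refine ⟨⌊x₂⌋ - ⌊x₁⌋, ?_⟩
  have hτ : ((n₂ - n₁ : ℕ) : ℝ) = (n₂ : ℝ) - n₁ := by
    have : n₁ ≤ n₂ := by omega
    push_cast [Nat.cast_sub this]; ring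
  have hxe : ∀ (n : ℕ), ω j * n = 2 * π * (ω j * n / (2 * π)) := by
    intro n; field_simp
  have key : ω j * ((n₂ - n₁ : ℕ) : ℝ) - 2 * π * (⌊x₂⌋ - ⌊x₁⌋) =
      2 * π * (Int.fract x₂ - Int.fract x₁) := by
    rw [hτ]
    have e1 : ω j * (n₂ : ℝ) = 2 * π * x₂ := hxe n₂
    have e2 : ω j * (n₁ : ℝ) = 2 * π * x₁ := hxe n₁
    have f1 : Int.fract x₂ = x₂ - ⌊x₂⌋ := (Int.self_sub_floor x₂).symm
    have f2 : Int.fract x₁ = x₁ - ⌊x₁⌋ := (Int.self_sub_floor x₁).symm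
    rw [f1, f2]
    nlinarith [e1, e2]
  rw [Int.cast_sub, key, abs_mul, abs_of_pos (by positivity : (0:ℝ) < 2 * π)]
  calc 2 * π * |Int.fract x₂ - Int.fract x₁| < 2 * π * (1 / K) :=
        mul_lt_mul_of_pos_left hfrd (by positivity)
    _ = 2 * π / K := by ring
    _ < η := by
        rw [div_lt_iff₀ hKpos]
        rw [div_lt_iff₀ hη] at hK
        linarith

theorem stmt16 (m : ℕ) (hm : 1 ≤ m) (a b ω θ : Fin m → ℝ)
    (hab : ∀ j, a j ^ 2 + b j ^ 2 ≠ 0)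
    (hθs : ∀ j, Real.sin (θ j) = a j / Real.sqrt (a j ^ 2 + b j ^ 2))
    (hθc : ∀ j, Real.cos (θ j) = b j / Real.sqrt (a j ^ 2 + b j ^ 2))
    (ε : ℝ) (hε : 0 < ε)
    (ht₀ : ∃ t₀ ≥ (0 : ℝ), ∀ j, 2 * ε < Real.sin (θ j + ω j * t₀)) :
    MeasureTheory.volume {t : ℝ | 0 ≤ t ∧ ∀ j, ε < Real.sin (θ j + ω j * t)} = ⊤ := by
  obtain ⟨t₀, ht₀0, ht₀s⟩ := ht₀
  have hne : (Finset.univ : Finset (Fin m)).Nonempty := ⟨⟨0, hm⟩, Finset.mem_univ _⟩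
  set M : ℝ := (Finset.univ.sup' hne fun j => |ω j|) + 1 with hM
  have hsup0 : 0 ≤ Finset.univ.sup' hne fun j => |ω j| :=
    le_trans (abs_nonneg (ω (⟨0, hm⟩ : Fin m))) (Finset.le_sup' (fun j => |ω j|) (Finset.mem_univ (⟨0, hm⟩ : Fin m)))
  have hMpos : 0 < M := by rw [hM]; linarith
  have hωM : ∀ j, |ω j| ≤ M := fun j =>
    le_trans (Finset.le_sup' (fun j => |ω j|) (Finset.mem_univ j)) (by rw [hM]; linarith)
  set δ : ℝ := min (ε / (2 * M)) (1 / 2) with hδdef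
  have hδpos : 0 < δ := lt_min (by positivity) (by norm_num)
  have hδhalf : δ ≤ 1 / 2 := min_le_right _ _
  have hMδ : M * δ ≤ ε / 2 := by
    have : δ ≤ ε / (2 * M) := min_le_left _ _
    calc M * δ ≤ M * (ε / (2 * M)) := mul_le_mul_of_nonneg_left this hMpos.le
      _ = ε / 2 := by field_simp
  -- recurrence times
  have key : ∀ N : ℕ, ∃ τ : ℕ, N < τ ∧ ∀ j, ∃ k : ℤ, |ω j * τ - 2 * π * k| < ε / 2 :=
    fun N => recur m ω (ε / 2) (by linarith) N
  choose F hF1 hF2 using key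
  let τ : ℕ → ℕ := fun k => Nat.rec (motive := fun _ => ℕ) (F 0) (fun _ prev => F prev) k
  have hτs : ∀ k, τ (k + 1) = F (τ k) := fun k => rfl
  have hτmono : StrictMono τ := strictMono_nat_of_lt_succ fun k => by
    rw [hτs]; exact hF1 (τ k)
  have hτprop : ∀ k, ∀ j, ∃ kk : ℤ, |ω j * (Nat.cast (τ k) : ℝ) - 2 * π * (kk : ℝ)| < ε / 2 := by
    intro k
    cases k with
    | zero => exact hF2 0
    | succ n => rw [hτs]; exact hF2 (τ n)
  set S : Set ℝ := {t : ℝ | 0 ≤ t ∧ ∀ j, ε < Real.sin (θ j + ω j * t)} with hS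
  -- each interval is inside S
  have hsub : ∀ k, Set.Icc (t₀ + (τ k : ℝ)) (t₀ + (τ k : ℝ) + δ) ⊆ S := by
    intro k t ht
    obtain ⟨htl, htr⟩ := ht
    have hτnn : (0 : ℝ) ≤ (τ k : ℝ) := Nat.cast_nonneg _
    refine ⟨by linarith, ?_⟩
    intro j
    obtain ⟨kk, hkk⟩ := hτprop k j
    have heq : θ j + ω j * t = (θ j + ω j * t - (kk : ℝ) * (2 * π)) + kk * (2 * π) := by ring
    rw [heq, Real.sin_add_int_mul_two_pi]
    set A := θ j + ω j * t - (kk : ℝ) * (2 * π) with hA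
    set B := θ j + ω j * t₀ with hB
    have hAB : |A - B| ≤ ε := by
      have e : A - B = ω j * (t - t₀ - (τ k : ℝ)) + (ω j * (τ k : ℝ) - 2 * π * kk) := by
        rw [hA, hB]; ring
      rw [e]
      have h1 : |ω j * (t - t₀ - (τ k : ℝ))| ≤ M * δ := by
        rw [abs_mul]
        have h2 : |t - t₀ - (τ k : ℝ)| ≤ δ := by
          rw [abs_le]; constructor <;> linarith
        exact mul_le_mul (hωM j) h2 (abs_nonneg _) hMpos.le
      calc |ω j * (t - t₀ - (τ k : ℝ)) + (ω j * (τ k : ℝ) - 2 * π * kk)|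
          ≤ |ω j * (t - t₀ - (τ k : ℝ))| + |ω j * (τ k : ℝ) - 2 * π * kk| := abs_add_le _ _
        _ ≤ M * δ + ε / 2 := add_le_add h1 hkk.le
        _ ≤ ε / 2 + ε / 2 := by linarith
        _ = ε := by ring
    have hlip := sin_lip A B
    have h2ε := ht₀s j
    have : |Real.sin A - Real.sin B| ≤ ε := le_trans hlip hAB
    rw [abs_le] at this
    have : Real.sin B - ε ≤ Real.sin A := by linarith [this.1]
    rw [hB] at this
    linarith
  -- measure of union of disjoint intervals is ⊤
  have hdisj : Pairwise (Function.onFun Disjoint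
      fun k => Set.Icc (t₀ + (τ k : ℝ)) (t₀ + τ k + δ)) := by
    have haux : ∀ k l : ℕ, k < l →
        Disjoint (Set.Icc (t₀ + (τ k : ℝ)) (t₀ + τ k + δ))
          (Set.Icc (t₀ + (τ l : ℝ)) (t₀ + τ l + δ)) := by
      intro k l hkl
      have h1 : τ k + 1 ≤ τ l := hτmono hkl
      have h1' : (τ k : ℝ) + 1 ≤ (τ l : ℝ) := by exact_mod_cast h1
      apply Set.disjoint_left.2
      rintro x ⟨_, hx2⟩ ⟨hx3, _⟩
      linarith
    intro k l hkl
    rcases lt_or_gt_of_ne hkl with h | h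
    · exact haux k l h
    · exact (haux l k h).symm
  have hmeas : volume (⋃ k, Set.Icc (t₀ + (τ k : ℝ)) (t₀ + τ k + δ)) = ⊤ := by
    rw [measure_iUnion hdisj fun k => measurableSet_Icc]
    have : ∀ k : ℕ, volume (Set.Icc (t₀ + (τ k : ℝ)) (t₀ + τ k + δ)) =
        ENNReal.ofReal δ := by
      intro k; rw [Real.volume_Icc]; congr 1; ring
    simp_rw [this]
    exact ENNReal.tsum_const_eq_top_of_ne_zero (by
      simp [ENNReal.ofReal_eq_zero]; linarith)
  have hle : volume (⋃ k, Set.Icc (t₀ + (τ k : ℝ)) (t₀ + τ k + δ)) ≤ volume S :=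
    measure_mono (Set.iUnion_subset hsub)
  rw [hmeas] at hle
  exact top_le_iff.mp hle
end
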